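/- Let λ ∈ ℚ[t] be an irreducible polynomial and c a positive integer. Then the following are equivalent: (i) for every positive integer r, the polynomial λ(t^r) has an irreducible factor in ℚ[t] which is reciprocal; (ii) there exists a sequence α = (α_i)_{i≥1} of nonzero reciprocal algebraic numbers in ℂ, indexed by the positive integers, satisfying (α_{ri})^r = α_i for all positive integers r and i, such that λ(α_c) = 0. -/

import Mathlib

open Polynomial

/-- A nonzero algebraic number `z ∈ ℂ` is *reciprocal* if `z` and `z⁻¹` have the same
minimal polynomial over `ℚ`. -/
def IsReciprocalNum (z : ℂ) : Prop :=
  z ≠ 0 ∧ IsAlgebraic ℚ z ∧ minpoly ℚ z = minpoly ℚ z⁻¹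

/-- A power of a reciprocal number is reciprocal. -/
lemma IsReciprocalNum.pow {z : ℂ} (h : IsReciprocalNum z) (k : ℕ) :
    IsReciprocalNum (z ^ k) := by
  obtain ⟨hz, halg, hmin⟩ := h
  have hi : IsIntegral ℚ z := halg.isIntegral
  have hirr : Irreducible (minpoly ℚ z) := minpoly.irreducible hi
  haveI : Fact (Irreducible (minpoly ℚ z)) := ⟨hirr⟩
  have hinvroot : Polynomial.aeval z⁻¹ (minpoly ℚ z) = 0 := by
    rw [hmin]; exact minpoly.aeval ℚ z⁻¹
  set p := minpoly ℚ z with hp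
  let φ : AdjoinRoot p →ₐ[ℚ] ℂ := AdjoinRoot.liftAlgHom p (Algebra.ofId ℚ ℂ) z (minpoly.aeval ℚ z)
  let ψ : AdjoinRoot p →ₐ[ℚ] ℂ := AdjoinRoot.liftAlgHom p (Algebra.ofId ℚ ℂ) z⁻¹ hinvroot
  have hφ : Function.Injective φ := φ.toRingHom.injective
  have hψ : Function.Injective ψ := ψ.toRingHom.injective
  have h1 : minpoly ℚ (φ (AdjoinRoot.root p ^ k)) = minpoly ℚ (AdjoinRoot.root p ^ k) :=
    minpoly.algHom_eq φ hφ _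
  have h2 : minpoly ℚ (ψ (AdjoinRoot.root p ^ k)) = minpoly ℚ (AdjoinRoot.root p ^ k) :=
    minpoly.algHom_eq ψ hψ _
  have hφr : φ (AdjoinRoot.root p ^ k) = z ^ k := by
    rw [map_pow, show φ (AdjoinRoot.root p) = z from AdjoinRoot.liftAlgHom_root _ _ _ _]
  have hψr : ψ (AdjoinRoot.root p ^ k) = (z ^ k)⁻¹ := by
    rw [map_pow, show ψ (AdjoinRoot.root p) = z⁻¹ from AdjoinRoot.liftAlgHom_root _ _ _ _, inv_pow]
  refine ⟨pow_ne_zero _ hz, (hi.pow k).isAlgebraic, ?_⟩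
  calc minpoly ℚ (z ^ k) = minpoly ℚ (AdjoinRoot.root p ^ k) := by rw [← hφr]; exact h1
    _ = minpoly ℚ (z ^ k)⁻¹ := by rw [← hψr]; exact h2.symm

/-- The positive naturals, ordered by divisibility. -/
def PNatDvd : Type := ℕ+

namespace PNatDvd

/-- `ℕ+ → PNatDvd`. -/
def mk (n : ℕ+) : PNatDvd := n

/-- `PNatDvd → ℕ+`. -/
def val (n : PNatDvd) : ℕ+ := n

instance : Preorder PNatDvd where
  le a b := a.val ∣ b.val
  le_refl a := dvd_refl _
  le_trans a b c hab hbc := dvd_trans hab hbc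

lemma le_iff {a b : PNatDvd} : a ≤ b ↔ a.val ∣ b.val := Iff.rfl

instance : IsDirected PNatDvd (· ≤ ·) :=
  ⟨fun a b => ⟨mk (a.val * b.val), dvd_mul_right _ _, dvd_mul_left _ _⟩⟩

instance : Nonempty PNatDvd := ⟨mk 1⟩

end PNatDvd

open CategoryTheory in
/-- The inverse system of reciprocal roots of `λ(t^n)`. -/
def recipFunctor (lam : ℚ[X]) : PNatDvdᵒᵖ ⥤ Type where
  obj j := {w : ℂ // aeval (w ^ ((j.unop.val : ℕ+) : ℕ)) lam = 0 ∧ IsReciprocalNum w}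
  map {j j'} f := TypeCat.ofHom fun w =>
    ⟨w.1 ^ (((j.unop.val : ℕ+) : ℕ) / ((j'.unop.val : ℕ+) : ℕ)), by
      have hdvd : ((j'.unop.val : ℕ+) : ℕ) ∣ ((j.unop.val : ℕ+) : ℕ) :=
        PNat.dvd_iff.mp (leOfHom f.unop)
      constructor
      · rw [← pow_mul, Nat.div_mul_cancel hdvd]
        exact w.2.1
      · exact w.2.2.pow _⟩
  map_id j := by
    ext w
    show w.1 ^ (((j.unop.val : ℕ+) : ℕ) / ((j.unop.val : ℕ+) : ℕ)) = w.1
    rw [Nat.div_self j.unop.val.pos, pow_one]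
  map_comp {j j' j''} f g := by
    ext w
    show w.1 ^ (((j.unop.val : ℕ+) : ℕ) / ((j''.unop.val : ℕ+) : ℕ))
        = (w.1 ^ (((j.unop.val : ℕ+) : ℕ) / ((j'.unop.val : ℕ+) : ℕ)))
          ^ (((j'.unop.val : ℕ+) : ℕ) / ((j''.unop.val : ℕ+) : ℕ))
    set a := ((j.unop.val : ℕ+) : ℕ)
    set b := ((j'.unop.val : ℕ+) : ℕ)
    set cc := ((j''.unop.val : ℕ+) : ℕ)
    have hba : b ∣ a := PNat.dvd_iff.mp (leOfHom f.unop)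
    have hcb : cc ∣ b := PNat.dvd_iff.mp (leOfHom g.unop)
    rw [← pow_mul]
    congr 1
    rw [Nat.div_mul_div_comm hba hcb, mul_comm b cc, Nat.mul_div_mul_right _ _ j'.unop.val.pos]

/-- For an irreducible `λ ∈ ℚ[t]` and a positive integer `c`, the
polynomial `λ(t^r)` has a reciprocal irreducible factor for every positive integer `r`
if and only if there is a sequence `α = (α_i)_{i ≥ 1}` of nonzero reciprocal algebraic
numbers with `(α_{r·i})^r = α_i` for all `r, i ≥ 1` such that `λ(α_c) = 0`. -/
theorem reciprocal_factor_iff_exists_compatible_sequence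
    (lam : ℚ[X]) (hlam : Irreducible lam) (c : ℕ+) :
    (∀ r : ℕ+, ∃ q : ℚ[X], Irreducible q ∧ q ∣ lam.comp (X ^ (r : ℕ)) ∧
        ∃ w : ℂ, w ≠ 0 ∧ aeval w q = 0 ∧ aeval w⁻¹ q = 0) ↔
    (∃ α : ℕ+ → ℂ, (∀ i, IsReciprocalNum (α i)) ∧
        (∀ r i : ℕ+, α (r * i) ^ (r : ℕ) = α i) ∧ aeval (α c) lam = 0) := by
  constructor
  · intro h
    -- the sets of reciprocal roots of `λ(t^n)` are nonempty…
    have hne : ∀ j : PNatDvdᵒᵖ, Nonempty ((recipFunctor lam).obj j) := by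
      intro j
      obtain ⟨q, hq, hdvd, w, hw0, hwq, hwq'⟩ := h j.unop.val
      have hwl : aeval (w ^ ((j.unop.val : ℕ+) : ℕ)) lam = 0 := by
        obtain ⟨k, hk⟩ := hdvd
        have : aeval w (lam.comp (X ^ ((j.unop.val : ℕ+) : ℕ))) = 0 := by
          rw [hk, map_mul, hwq, zero_mul]
        rwa [aeval_comp, map_pow, aeval_X] at this
      have hrec : IsReciprocalNum w := by
        refine ⟨hw0, ⟨q, hq.ne_zero, hwq⟩, ?_⟩
        rw [← minpoly.eq_of_irreducible hq hwq, ← minpoly.eq_of_irreducible hq hwq']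
      exact ⟨⟨w, hwl, hrec⟩⟩
    -- …and finite.
    have hfin : ∀ j : PNatDvdᵒᵖ, Finite ((recipFunctor lam).obj j) := by
      intro j
      set n := ((j.unop.val : ℕ+) : ℕ)
      have hcomp : lam.comp (X ^ n) ≠ 0 := by
        intro hzero
        have hdeg : (X ^ n : ℚ[X]).natDegree ≠ 0 := by
          rw [natDegree_X_pow]; exact j.unop.val.ne_zero
        have := leadingCoeff_comp (p := lam) hdeg
        rw [hzero, leadingCoeff_zero, leadingCoeff_X_pow, one_pow, mul_one] at this
        exact hlam.ne_zero (leadingCoeff_eq_zero.mp this.symm)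
      have hmap : (lam.comp (X ^ n)).map (algebraMap ℚ ℂ) ≠ 0 :=
        (Polynomial.map_ne_zero_iff (algebraMap ℚ ℂ).injective).mpr hcomp
      have hbig : {w : ℂ | aeval (w ^ n) lam = 0}.Finite := by
        refine (Polynomial.finite_setOf_isRoot hmap).subset ?_
        intro w hw
        show ((lam.comp (X ^ n)).map (algebraMap ℚ ℂ)).eval w = 0
        rw [eval_map, ← aeval_def, aeval_comp, map_pow, aeval_X]
        exact hw
      exact (hbig.subset fun w hw => hw.1).to_subtype
    haveI := hne; haveI := hfin
    obtain ⟨u, hu⟩ := nonempty_sections_of_finite_inverse_system (recipFunctor lam)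
    set β : ℕ+ → ℂ := fun n => (u (Opposite.op (PNatDvd.mk n))).1 with hβ
    have key : ∀ a b : ℕ+, b ∣ a → β a ^ ((a : ℕ) / (b : ℕ)) = β b := by
      intro a b hba
      have hle : (PNatDvd.mk b) ≤ (PNatDvd.mk a) := hba
      have f : Opposite.op (PNatDvd.mk a) ⟶ Opposite.op (PNatDvd.mk b) :=
        (CategoryTheory.homOfLE hle).op
      exact congrArg Subtype.val (hu f)
    have hroot : ∀ n : ℕ+, aeval (β n ^ (n : ℕ)) lam = 0 := fun n =>
      (u (Opposite.op (PNatDvd.mk n))).2.1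
    have hrec : ∀ n : ℕ+, IsReciprocalNum (β n) := fun n =>
      (u (Opposite.op (PNatDvd.mk n))).2.2
    refine ⟨fun i => β i ^ (c : ℕ), fun i => (hrec i).pow _, ?_, ?_⟩
    · intro r i
      have hri : β (r * i) ^ (r : ℕ) = β i := by
        have := key (r * i) i (dvd_mul_left _ _)
        rwa [PNat.mul_coe, Nat.mul_div_cancel _ i.pos] at this
      rw [pow_right_comm, hri]
    · have hc1 : β c ^ (c : ℕ) = β 1 := by
        have := key c 1 (one_dvd _)
        rwa [PNat.one_coe, Nat.div_one] at this
      show aeval (β c ^ (c : ℕ)) lam = 0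
      rw [hc1]
      have := hroot 1
      rwa [PNat.one_coe, pow_one] at this
  · rintro ⟨α, hα, hcomp, hroot⟩
    intro r
    set w := α (r * c) with hw
    obtain ⟨hw0, halg, hmin⟩ := hα (r * c)
    have hi : IsIntegral ℚ w := halg.isIntegral
    refine ⟨minpoly ℚ w, minpoly.irreducible hi, ?_, w, hw0, minpoly.aeval ℚ w, ?_⟩
    · apply minpoly.dvd
      rw [aeval_comp, map_pow, aeval_X, hcomp r c, hroot]
    · rw [hmin]; exact minpoly.aeval ℚ w⁻¹
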